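/- Under the conditional independence of censoring given Z, positivity of G_c, and integrability, the weighted log-likelihood satisfies E[ (Δ₁Δ₂ / G_c(T₁, T₂; Z)) · log L(θ; X, T, ε) ] = E[ log L(θ; X, T, ε) ] for every parameter θ. -/

import Mathlib

open MeasureTheory ProbabilityTheory

lemma ipcw_lintegral_aux {Ω : Type*} {m m0 : MeasurableSpace Ω} {μ : Measure Ω}
    [IsFiniteMeasure μ] (hm : m ≤ m0) {g W : Ω → ℝ}
    (hgm : Measurable[m] g) (hg0 : ∀ ω, 0 ≤ g ω)
    (hW : Integrable W μ) (hW0 : ∀ ω, 0 ≤ W ω) :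
    ∫⁻ ω, ENNReal.ofReal (g ω * W ω) ∂μ
      = ∫⁻ ω, ENNReal.ofReal (g ω * (μ[W|m]) ω) ∂μ := by
  haveI : SigmaFinite (μ.trim hm) := inferInstance
  set gn : ℕ → Ω → ℝ := fun n ω => min (g ω) n with hgn_def
  have hgn_meas : ∀ n, Measurable[m] (gn n) := fun n => hgm.min measurable_const
  have hgn0 : ∀ n ω, 0 ≤ gn n ω := fun n ω => le_min (hg0 ω) n.cast_nonneg
  have hgn_mono : ∀ ω, Monotone fun n => gn n ω := fun ω a b hab =>
    min_le_min le_rfl (Nat.cast_le.2 hab)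
  have hgn_le : ∀ n ω, gn n ω ≤ g ω := fun n ω => min_le_left _ _
  -- integrability of gn n * V for any integrable V
  have hint : ∀ (V : Ω → ℝ), Integrable V μ → ∀ n,
      Integrable (fun ω => gn n ω * V ω) μ := by
    intro V hV n
    refine Integrable.mono' (hV.norm.const_mul n)
      (((hgn_meas n).mono hm le_rfl).aestronglyMeasurable.mul hV.1) ?_
    filter_upwards with ω
    rw [norm_mul, Real.norm_eq_abs (gn n ω), abs_of_nonneg (hgn0 n ω)]
    exact mul_le_mul_of_nonneg_right (min_le_right _ _) (norm_nonneg _)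
  -- key: MCT representation
  have key : ∀ (V : Ω → ℝ), Integrable V μ → (∀ᵐ ω ∂μ, 0 ≤ V ω) →
      ∫⁻ ω, ENNReal.ofReal (g ω * V ω) ∂μ
        = ⨆ n, ENNReal.ofReal (∫ ω, gn n ω * V ω ∂μ) := by
    intro V hV hV0
    have h2 : ∀ᵐ ω ∂μ, (⨆ n, ENNReal.ofReal (gn n ω * V ω))
        = ENNReal.ofReal (g ω * V ω) := by
      filter_upwards [hV0] with ω hV0ω
      refine le_antisymm (iSup_le fun n => ENNReal.ofReal_le_ofReal
        (mul_le_mul_of_nonneg_right (hgn_le n ω) hV0ω)) ?_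
      have : gn ⌈g ω⌉₊ ω = g ω := min_eq_left (Nat.le_ceil _)
      calc ENNReal.ofReal (g ω * V ω) = ENNReal.ofReal (gn ⌈g ω⌉₊ ω * V ω) := by rw [this]
        _ ≤ ⨆ n, ENNReal.ofReal (gn n ω * V ω) := le_iSup (fun n => ENNReal.ofReal (gn n ω * V ω)) ⌈g ω⌉₊
    have h1 : ∫⁻ ω, ⨆ n, ENNReal.ofReal (gn n ω * V ω) ∂μ
        = ⨆ n, ∫⁻ ω, ENNReal.ofReal (gn n ω * V ω) ∂μ := by
      refine lintegral_iSup' (fun n => ?_) ?_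
      · exact (ENNReal.measurable_ofReal.comp_aemeasurable
          ((hint V hV n).1.aemeasurable))
      · filter_upwards [hV0] with ω hV0ω
        intro a b hab
        exact ENNReal.ofReal_le_ofReal
          (mul_le_mul_of_nonneg_right (hgn_mono ω hab) hV0ω)
    calc ∫⁻ ω, ENNReal.ofReal (g ω * V ω) ∂μ
        = ∫⁻ ω, ⨆ n, ENNReal.ofReal (gn n ω * V ω) ∂μ := lintegral_congr_ae (h2.mono fun ω h => h.symm)
      _ = ⨆ n, ∫⁻ ω, ENNReal.ofReal (gn n ω * V ω) ∂μ := h1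
      _ = ⨆ n, ENNReal.ofReal (∫ ω, gn n ω * V ω ∂μ) := by
          refine iSup_congr fun n => ?_
          refine (ofReal_integral_eq_lintegral_ofReal (hint V hV n) ?_).symm
          filter_upwards [hV0] with ω h using mul_nonneg (hgn0 n ω) h
  have hWc : Integrable (μ[W|m]) μ := integrable_condExp
  have hWc0 : ∀ᵐ ω ∂μ, 0 ≤ (μ[W|m]) ω :=
    condExp_nonneg (Filter.Eventually.of_forall hW0)
  rw [key W hW (Filter.Eventually.of_forall hW0), key _ hWc hWc0]
  refine iSup_congr fun n => ?_
  congr 1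
  have : ∫ ω, gn n ω * W ω ∂μ = ∫ ω, (μ[(gn n) * W|m]) ω ∂μ :=
    (integral_condExp hm).symm
  rw [this]
  refine integral_congr_ae ?_
  exact (condExp_mul_of_stronglyMeasurable_left ((hgn_meas n).stronglyMeasurable)
    (hint W hW n) hW)

/-- The IPCW-weighted log-likelihood is unbiased for the complete-data
log-likelihood: under conditional independence of censoring given `Z`
(expressed via `E[Δ₁Δ₂ | full data] = G_c(T₁,T₂;Z)` a.s.), positivity of `G_c`
and boundedness of the log-likelihood, for every parameter `θ`,
`E[(Δ₁Δ₂ / G_c(T₁,T₂;Z)) · log L(θ; X,T,ε)] = E[log L(θ; X,T,ε)]`. -/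
theorem stmt7 {Ω 𝒳 𝒵 Θ : Type*} [MeasureSpace Ω] [IsProbabilityMeasure (ℙ : Measure Ω)]
    [MeasurableSpace 𝒳] [MeasurableSpace 𝒵]
    (T₁ T₂ C₁ C₂ : Ω → ℝ) (ε₁ ε₂ : Ω → ℕ) (X : Ω → 𝒳) (Z : Ω → 𝒵)
    (Gc : ℝ → ℝ → 𝒵 → ℝ) (logL : Θ → 𝒳 → ℝ → ℝ → ℕ → ℕ → ℝ)
    (m : MeasurableSpace Ω) (hm : m ≤ (inferInstance : MeasurableSpace Ω))
    (hmdef : m = MeasurableSpace.comap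
      (fun ω => (X ω, T₁ ω, T₂ ω, ε₁ ω, ε₂ ω, Z ω)) inferInstance)
    (hcond : ℙ[fun ω => (if T₁ ω ≤ C₁ ω then (1:ℝ) else 0) *
                (if T₂ ω ≤ C₂ ω then (1:ℝ) else 0) | m]
        =ᵐ[ℙ] fun ω => Gc (T₁ ω) (T₂ ω) (Z ω))
    (hpos : ∀ᵐ ω ∂ℙ, 0 < Gc (T₁ ω) (T₂ ω) (Z ω))
    (hGmeas : Measurable[m] fun ω => Gc (T₁ ω) (T₂ ω) (Z ω))
    (hLmeas : ∀ θ, Measurable[m] fun ω => logL θ (X ω) (T₁ ω) (T₂ ω) (ε₁ ω) (ε₂ ω))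
    (hLbdd : ∀ θ, ∃ M : ℝ, ∀ ω, |logL θ (X ω) (T₁ ω) (T₂ ω) (ε₁ ω) (ε₂ ω)| ≤ M) :
    ∀ θ : Θ,
      ∫ ω, ((if T₁ ω ≤ C₁ ω then (1:ℝ) else 0) * (if T₂ ω ≤ C₂ ω then (1:ℝ) else 0)
          / Gc (T₁ ω) (T₂ ω) (Z ω)) * logL θ (X ω) (T₁ ω) (T₂ ω) (ε₁ ω) (ε₂ ω) ∂ℙ
        = ∫ ω, logL θ (X ω) (T₁ ω) (T₂ ω) (ε₁ ω) (ε₂ ω) ∂ℙ := by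
  intro θ
  set W : Ω → ℝ := fun ω => (if T₁ ω ≤ C₁ ω then (1:ℝ) else 0) *
      (if T₂ ω ≤ C₂ ω then (1:ℝ) else 0) with hW_def
  set G : Ω → ℝ := fun ω => Gc (T₁ ω) (T₂ ω) (Z ω) with hG_def
  set L : Ω → ℝ := fun ω => logL θ (X ω) (T₁ ω) (T₂ ω) (ε₁ ω) (ε₂ ω) with hL_def
  obtain ⟨M, hM⟩ := hLbdd θ
  by_cases hle : m ≤ (MeasureSpace.toMeasurableSpace : MeasurableSpace Ω)
  swap
  · exfalso
    have h0 : (ℙ[W|m]) = 0 := condExp_of_not_le hle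
    obtain ⟨ω, hω1, hω2⟩ := (hcond.and hpos).exists
    rw [h0] at hω1
    simp only [Pi.zero_apply] at hω1
    exact absurd hω1.symm (ne_of_gt hω2)
  have hW0 : ∀ ω, 0 ≤ W ω := fun ω => mul_nonneg (by positivity) (by positivity)
  -- W is integrable (otherwise condexp = 0, contradicting positivity of G)
  have hWint : Integrable W ℙ := by
    by_contra hWint
    have h0 : (ℙ[W|m]) = 0 := condExp_of_not_integrable hWint
    obtain ⟨ω, hω1, hω2⟩ := (hcond.and hpos).exists
    rw [h0] at hω1
    simp only [Pi.zero_apply] at hω1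
    exact absurd hω1.symm (ne_of_gt hω2)
  have hGW : (ℙ[W|m]) =ᵐ[ℙ] G := hcond
  -- Integrability of the weighted integrand
  set g : Ω → ℝ := fun ω => |L ω| / max (G ω) 0 with hg_def
  have hg0 : ∀ ω, 0 ≤ g ω := fun ω => div_nonneg (abs_nonneg _) (le_max_right _ _)
  have hgm : Measurable[m] g := ((hLmeas θ).abs.div (hGmeas.max measurable_const))
  have hm' := hle
  have key := ipcw_lintegral_aux (μ := ℙ) hm' hgm hg0 hWint hW0
  have hfmeas : AEStronglyMeasurable[MeasureSpace.toMeasurableSpace] (fun ω => L ω / G ω * W ω) ℙ := by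
    have h1 : AEStronglyMeasurable[MeasureSpace.toMeasurableSpace] (fun ω => L ω / G ω) ℙ := by
      exact (((hLmeas θ).div hGmeas).mono hle le_rfl).aestronglyMeasurable
    exact h1.mul hWint.1
  have hfin : Integrable (fun ω => L ω / G ω * W ω) ℙ := by
    refine ⟨hfmeas, ?_⟩
    rw [hasFiniteIntegral_iff_norm]
    have e1 : ∫⁻ ω, ENNReal.ofReal ‖L ω / G ω * W ω‖ ∂ℙ
        = ∫⁻ ω, ENNReal.ofReal (g ω * W ω) ∂ℙ := by
      refine lintegral_congr_ae ?_
      filter_upwards [hpos] with ω hω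
      have hGne : G ω ≠ 0 := ne_of_gt hω
      rw [norm_mul, Real.norm_eq_abs, Real.norm_eq_abs, abs_of_nonneg (hW0 ω),
        abs_div, abs_of_pos hω, hg_def]
      simp only [hG_def, max_eq_left hω.le]
    have e2 : ∫⁻ ω, ENNReal.ofReal (g ω * (ℙ[W|m]) ω) ∂ℙ
        = ∫⁻ ω, ENNReal.ofReal |L ω| ∂ℙ := by
      refine lintegral_congr_ae ?_
      filter_upwards [hGW, hpos] with ω h1 h2
      rw [h1, hg_def]
      simp only [hG_def, max_eq_left h2.le]
      rw [div_mul_cancel₀ _ (ne_of_gt h2)]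
    rw [e1, key, e2]
    calc ∫⁻ ω, ENNReal.ofReal |L ω| ∂ℙ ≤ ∫⁻ _, ENNReal.ofReal M ∂ℙ :=
          lintegral_mono fun ω => ENNReal.ofReal_le_ofReal (hM ω)
      _ = ENNReal.ofReal M := by rw [lintegral_const, measure_univ, mul_one]
      _ < ⊤ := ENNReal.ofReal_lt_top
  -- Main computation
  calc ∫ ω, (W ω / G ω) * L ω ∂ℙ
      = ∫ ω, ((fun ω => L ω / G ω) * W) ω ∂ℙ := by
        refine integral_congr_ae (Filter.Eventually.of_forall fun ω => ?_)
        simp only [Pi.mul_apply]; ring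
    _ = ∫ ω, (condExp m ℙ ((fun ω => L ω / G ω) * W)) ω ∂ℙ := by exact (integral_condExp (μ := ℙ) (f := (fun ω => L ω / G ω) * W) hm').symm
    _ = ∫ ω, ((fun ω => L ω / G ω) * (condExp m ℙ W)) ω ∂ℙ := by
        refine integral_congr_ae
          (condExp_mul_of_stronglyMeasurable_left (((hLmeas θ).div hGmeas).stronglyMeasurable) ?_ hWint)
        exact hfin
    _ = ∫ ω, L ω ∂ℙ := by
        refine integral_congr_ae ?_
        filter_upwards [hGW, hpos] with ω h1 h2
        simp only [Pi.mul_apply]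
        rw [h1, div_mul_cancel₀ _ (ne_of_gt h2)]
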